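/- Let (X, κ) be a connectivity space and let ∼ be an equivalence relation on X all of whose equivalence classes belong to κ. Let s : X → X/∼ be the canonical surjection. Then the family {s''K : K ∈ κ} of images of connected sets is itself a connectivity structure on X/∼; consequently, the connectivity structure on X/∼ generated by the images of the connected sets of X is exactly {s''K : K ∈ κ}. -/

import Mathlib

/-- A connectivity structure on `X`. -/
def IsConnectivity {X : Type*} (κ : Set (Set X)) : Prop :=
  ∅ ∈ κ ∧ ∀ ℐ ⊆ κ, (⋂₀ ℐ).Nonempty → ⋃₀ ℐ ∈ κ

/-- The connectivity structure generated by a family of subsets: the intersection of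
all connectivity structures containing it. -/
def generated {X : Type*} (𝒜 : Set (Set X)) : Set (Set X) :=
  ⋂₀ {κ | IsConnectivity κ ∧ 𝒜 ⊆ κ}

theorem generated_self {X : Type*} {κ : Set (Set X)} (h : IsConnectivity κ) :
    generated κ = κ := by
  apply Set.Subset.antisymm
  · exact Set.sInter_subset_of_mem ⟨h, subset_rfl⟩
  · intro A hA κ' hκ'
    exact hκ'.2 hA

/-- If all equivalence classes are connected, the images of the connected sets already
form a connectivity structure on the quotient, so the quotient connectivity structure
is exactly the set of these images. -/
theorem quotient_structure_of_connected_classes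
    {X : Type*} (κ : Set (Set X)) (hκ : IsConnectivity κ)
    (r : Setoid X) (hcl : ∀ x : X, {y : X | r.r y x} ∈ κ) :
    IsConnectivity {A : Set (Quotient r) | ∃ K ∈ κ, A = Quotient.mk r '' K} ∧
    generated {A : Set (Quotient r) | ∃ K ∈ κ, A = Quotient.mk r '' K} =
      {A : Set (Quotient r) | ∃ K ∈ κ, A = Quotient.mk r '' K} := by
  have hsurj : Function.Surjective (Quotient.mk r) := Quotient.exists_rep
  have hconn : IsConnectivity {A : Set (Quotient r) | ∃ K ∈ κ, A = Quotient.mk r '' K} := by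
    constructor
    · exact ⟨∅, hκ.1, (Set.image_empty _).symm⟩
    · rintro ℐ hℐ ⟨q, hq⟩
      obtain ⟨x, hx⟩ := hsurj q
      -- the saturation of each A ∈ ℐ is connected
      have hsat : ∀ A ∈ ℐ, (Quotient.mk r ⁻¹' A) ∈ κ := by
        intro A hA
        obtain ⟨K, hK, rfl⟩ := hℐ hA
        -- K is nonempty since q ∈ A
        obtain ⟨k0, hk0, -⟩ := hq _ hA
        -- the preimage is the union of K ∪ (class k) over k ∈ K
        have hpre : Quotient.mk r ⁻¹' (Quotient.mk r '' K) =
            ⋃₀ {S | ∃ k ∈ K, S = K ∪ {y : X | r.r y k}} := by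
          ext y
          simp only [Set.mem_preimage, Set.mem_image, Set.mem_sUnion, Set.mem_setOf_eq]
          constructor
          · rintro ⟨k, hk, hyk⟩
            exact ⟨K ∪ {y : X | r.r y k}, ⟨k, hk, rfl⟩,
              Or.inr (Quotient.eq.mp hyk.symm)⟩
          · rintro ⟨S, ⟨k, hk, rfl⟩, hyS⟩
            rcases hyS with hy | hy
            · exact ⟨y, hy, rfl⟩
            · exact ⟨k, hk, (Quotient.eq.mpr hy).symm⟩
        rw [hpre]
        apply hκ.2
        · rintro S ⟨k, hk, rfl⟩
          have : K ∪ {y : X | r.r y k} = ⋃₀ {K, {y : X | r.r y k}} := by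
            simp [Set.sUnion_pair]
          rw [this]
          apply hκ.2
          · rintro T hT
            rcases hT with rfl | hT
            · exact hK
            · simp only [Set.mem_singleton_iff] at hT
              subst hT; exact hcl k
          · exact ⟨k, by simp [Set.mem_sInter]; exact hk⟩
        · refine ⟨k0, ?_⟩
          rintro S ⟨k, hk, rfl⟩
          exact Or.inl hk0
      -- take the union of the saturations
      set 𝒮 : Set (Set X) := {S | ∃ A ∈ ℐ, S = Quotient.mk r ⁻¹' A} with h𝒮
      have hU : ⋃₀ 𝒮 ∈ κ := by
        apply hκ.2
        · rintro S ⟨A, hA, rfl⟩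
          exact hsat A hA
        · refine ⟨x, ?_⟩
          rintro S ⟨A, hA, rfl⟩
          show Quotient.mk r x ∈ A
          rw [hx]; exact hq A hA
      refine ⟨⋃₀ 𝒮, hU, ?_⟩
      ext p
      simp only [Set.mem_sUnion, Set.mem_image, h𝒮, Set.mem_setOf_eq]
      constructor
      · rintro ⟨A, hA, hp⟩
        obtain ⟨y, hy⟩ := hsurj p
        exact ⟨y, ⟨_, ⟨A, hA, rfl⟩, by rw [Set.mem_preimage, hy]; exact hp⟩, hy⟩
      · rintro ⟨y, ⟨S, ⟨A, hA, rfl⟩, hy⟩, rfl⟩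
        exact ⟨A, hA, hy⟩
  exact ⟨hconn, generated_self hconn⟩
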